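/- Let V be a real vector space of dimension n and φ ∈ End(V) nonderogatory with a unique real eigenvalue λ of multiplicity n. Then the Lie algebra ℝ[φ] ⋉ V is isomorphic to ℝ[M₀] ⋉ ℝⁿ, where M₀ = Σ_{i=1}^{n−1} E_{i,i+1} is the principal nilpotent matrix. -/

import Mathlib

set_option synthInstance.maxHeartbeats 1000000
set_option maxHeartbeats 1000000

open Polynomial

/-- If a nonderogatory `φ ∈ End(V)` has a unique real eigenvalue `λ` of multiplicity `n`,
then the Lie algebra `ℝ[φ] ⋉ V` is isomorphic to `ℝ[M₀] ⋉ ℝⁿ`, where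
`M₀ = Σ_{i=1}^{n-1} E_{i,i+1}` is the principal nilpotent matrix. -/
theorem stmt13 {V : Type*} [AddCommGroup V] [Module ℝ V] [FiniteDimensional ℝ V]
    {n : ℕ} (hV : Module.finrank ℝ V = n)
    (φ : Module.End ℝ V) (lam : ℝ)
    (hnd : LinearMap.charpoly φ = minpoly ℝ φ)
    (hchar : LinearMap.charpoly φ = (X - C lam) ^ n)
    (M₀ : Matrix (Fin n) (Fin n) ℝ)
    (hM₀ : M₀ = ∑ i : Fin (n - 1),
      Matrix.single (⟨i.1, by have := i.2; omega⟩ : Fin n)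
        (⟨i.1 + 1, by have := i.2; omega⟩ : Fin n) (1 : ℝ)) :
    ∃ e : ((Algebra.adjoin ℝ {φ} : Subalgebra ℝ (Module.End ℝ V)) × V) ≃ₗ[ℝ]
        ((Algebra.adjoin ℝ {M₀} : Subalgebra ℝ (Matrix (Fin n) (Fin n) ℝ)) × (Fin n → ℝ)),
      ∀ u v : (Algebra.adjoin ℝ {φ} : Subalgebra ℝ (Module.End ℝ V)) × V,
        e (0, (u.1 : Module.End ℝ V) v.2 - (v.1 : Module.End ℝ V) u.2) =
          (0, ((e u).1 : Matrix (Fin n) (Fin n) ℝ).mulVec (e v).2 -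
            ((e v).1 : Matrix (Fin n) (Fin n) ℝ).mulVec (e u).2) := by
  rcases Nat.eq_zero_or_pos n with hn | hn
  · subst hn
    haveI hsV : Subsingleton V := Module.finrank_zero_iff.mp hV
    haveI : Subsingleton (Module.End ℝ V) :=
      ⟨fun f g => LinearMap.ext fun x => Subsingleton.elim _ _⟩
    haveI : Subsingleton (Matrix (Fin 0) (Fin 0) ℝ) :=
      ⟨fun a b => by ext i; exact i.elim0⟩
    haveI : Subsingleton (Fin 0 → ℝ) := ⟨fun a b => funext fun i => i.elim0⟩
    exact ⟨LinearEquiv.ofSubsingleton _ _, fun u v => Subsingleton.elim _ _⟩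
  -- main case : n ≥ 1
  have hstd : ∀ (a b i j : Fin n) (c : ℝ),
      Matrix.single a b c i j = if a = i ∧ b = j then c else 0 :=
    fun _ _ _ _ _ => rfl
  have hM₀' : ∀ i j : Fin n, M₀ i j = if j.1 = i.1 + 1 then 1 else 0 := by
    intro i j
    rw [hM₀, Matrix.sum_apply]
    by_cases h : j.1 = i.1 + 1
    · have hi : i.1 < n - 1 := by have := j.2; omega
      rw [if_pos h, Finset.sum_eq_single (⟨i.1, hi⟩ : Fin (n - 1))]
      · rw [hstd, if_pos ⟨Fin.ext rfl, Fin.ext (show i.1 + 1 = j.1 by omega)⟩]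
      · intro t _ ht
        rw [hstd, if_neg]
        rintro ⟨h1, h2⟩
        exact ht (Fin.ext (show t.1 = i.1 from congrArg Fin.val h1))
      · intro hmem; exact absurd (Finset.mem_univ _) hmem
    · rw [if_neg h, Finset.sum_eq_zero]
      intro t _
      rw [hstd, if_neg]
      rintro ⟨h1, h2⟩
      have e1 : t.1 = i.1 := congrArg Fin.val h1
      have e2 : t.1 + 1 = j.1 := congrArg Fin.val h2
      omega
  have hmin : minpoly ℝ φ = (X - C lam) ^ n := hnd.symm.trans hchar
  set N : Module.End ℝ V := φ - algebraMap ℝ (Module.End ℝ V) lam with hN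
  have hNn : N ^ n = 0 := by
    have h := minpoly.aeval ℝ φ
    rw [hmin, map_pow, map_sub, aeval_X, aeval_C] at h
    exact h
  have hNn1 : N ^ (n - 1) ≠ 0 := by
    intro h
    have h0 : (aeval φ) ((X - C lam) ^ (n - 1)) = 0 := by
      rw [map_pow, map_sub, aeval_X, aeval_C]; exact h
    have hd := minpoly.degree_le_of_ne_zero ℝ φ (pow_ne_zero _ (X_sub_C_ne_zero lam)) h0
    rw [hmin, degree_pow, degree_pow, degree_X_sub_C] at hd
    simp only [nsmul_eq_mul, mul_one, Nat.cast_le] at hd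
    omega
  obtain ⟨v, hv⟩ : ∃ v : V, (N ^ (n - 1)) v ≠ 0 := by
    by_contra h
    push_neg at h
    exact hNn1 (LinearMap.ext fun x => h x)
  set b' : Fin n → V := fun j => (N ^ (n - 1 - j.1)) v with hb'
  have hli : LinearIndependent ℝ b' := by
    rw [Fintype.linearIndependent_iff]
    intro g hg
    have key : ∀ m : ℕ, ∀ j : Fin n, n - 1 - j.1 = m → g j = 0 := by
      intro m
      induction m using Nat.strong_induction_on with
      | _ m ih =>
        intro j hj
        have happ : (N ^ j.1) (∑ j' : Fin n, g j' • b' j') = 0 := by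
          rw [hg, map_zero]
        rw [map_sum] at happ
        have hterm : ∀ j' : Fin n, j' ∈ Finset.univ → j' ≠ j →
            (N ^ j.1) (g j' • b' j') = 0 := by
          intro j' _ hne
          have hne' : j'.1 ≠ j.1 := fun h => hne (Fin.ext h)
          rcases lt_or_gt_of_ne hne' with hlt | hgt
          · rw [map_smul]
            have hz : (N ^ j.1) (b' j') = 0 := by
              show (N ^ j.1) ((N ^ (n - 1 - j'.1)) v) = 0
              rw [← Module.End.mul_apply, ← pow_add]
              have hle : n ≤ j.1 + (n - 1 - j'.1) := by
                have := j.2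
                have := j'.2
                omega
              rw [pow_eq_zero_of_le hle hNn]
              rfl
            rw [hz, smul_zero]
          · have hz : g j' = 0 := by
              refine ih (n - 1 - j'.1) ?_ j' rfl
              have h2 := j'.2
              have h3 := j.2
              omega
            rw [hz, zero_smul, map_zero]
        rw [Finset.sum_eq_single j hterm
          (fun h => absurd (Finset.mem_univ _) h)] at happ
        rw [map_smul] at happ
        have hb : (N ^ j.1) (b' j) = (N ^ (n - 1)) v := by
          show (N ^ j.1) ((N ^ (n - 1 - j.1)) v) = _
          rw [← Module.End.mul_apply, ← pow_add]
          have he : j.1 + (n - 1 - j.1) = n - 1 := by have := j.2; omega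
          rw [he]
        rw [hb] at happ
        rcases smul_eq_zero.mp happ with h | h
        · exact h
        · exact absurd h hv
    intro i
    exact key (n - 1 - i.1) i rfl
  haveI : Nonempty (Fin n) := ⟨⟨0, hn⟩⟩
  let b : Module.Basis (Fin n) ℝ V := basisOfLinearIndependentOfCardEqFinrank hli (by simp [hV])
  have hbb : ∀ j, b j = b' j := fun j =>
    congrFun (coe_basisOfLinearIndependentOfCardEqFinrank hli _) j
  have hNmat : LinearMap.toMatrixAlgEquiv b N = M₀ := by
    ext i j
    rw [LinearMap.toMatrixAlgEquiv_apply, hM₀' i j, hbb]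
    by_cases hj : j.1 = 0
    · have hz : N (b' j) = 0 := by
        show N ((N ^ (n - 1 - j.1)) v) = 0
        rw [← Module.End.mul_apply, ← pow_succ']
        have : n - 1 - j.1 + 1 = n := by have := j.2; omega
        rw [this, hNn]
        rfl
      rw [hz, map_zero, if_neg (show ¬ j.1 = i.1 + 1 by omega)]
      rfl
    · have hj1 : j.1 - 1 < n := by have := j.2; omega
      have hstep : N (b' j) = b' ⟨j.1 - 1, hj1⟩ := by
        show N ((N ^ (n - 1 - j.1)) v) = (N ^ (n - 1 - (j.1 - 1))) v
        rw [← Module.End.mul_apply, ← pow_succ']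
        have he : n - 1 - j.1 + 1 = n - 1 - (j.1 - 1) := by have := j.2; omega
        rw [he]
      rw [hstep, ← hbb, b.repr_self, Finsupp.single_apply]
      by_cases h : j.1 = i.1 + 1
      · rw [if_pos h, if_pos (Fin.ext (show j.1 - 1 = i.1 by omega))]
      · rw [if_neg h, if_neg]
        intro hc
        have e1 : j.1 - 1 = i.1 := congrArg Fin.val hc
        omega
  have hφN : φ = algebraMap ℝ (Module.End ℝ V) lam + N := by
    rw [hN]; abel
  set A := LinearMap.toMatrixAlgEquiv b with hA
  have hφmat : A φ = algebraMap ℝ (Matrix (Fin n) (Fin n) ℝ) lam + M₀ := by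
    rw [hφN, map_add, AlgEquiv.commutes, hNmat]
  have hadj : Algebra.adjoin ℝ ({A φ} : Set (Matrix (Fin n) (Fin n) ℝ)) =
      Algebra.adjoin ℝ {M₀} := by
    rw [hφmat]
    apply le_antisymm
    · rw [Algebra.adjoin_le_iff]
      rintro x hx
      rw [Set.mem_singleton_iff] at hx
      rw [hx]
      exact add_mem (Subalgebra.algebraMap_mem _ lam)
        (Algebra.self_mem_adjoin_singleton ℝ _)
    · rw [Algebra.adjoin_le_iff]
      rintro x hx
      rw [Set.mem_singleton_iff] at hx
      rw [hx]
      have h1 : algebraMap ℝ (Matrix (Fin n) (Fin n) ℝ) lam + M₀ ∈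
          Algebra.adjoin ℝ {algebraMap ℝ (Matrix (Fin n) (Fin n) ℝ) lam + M₀} :=
        Algebra.self_mem_adjoin_singleton ℝ _
      have h2 := sub_mem h1 (Subalgebra.algebraMap_mem
        (Algebra.adjoin ℝ {algebraMap ℝ (Matrix (Fin n) (Fin n) ℝ) lam + M₀}) lam)
      simpa using h2
  have hmap : (Algebra.adjoin ℝ ({φ} : Set (Module.End ℝ V))).map (A : Module.End ℝ V →ₐ[ℝ] Matrix (Fin n) (Fin n) ℝ) =
      Algebra.adjoin ℝ {M₀} := by
    rw [AlgHom.map_adjoin, Set.image_singleton]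
    simpa using hadj
  let E1 : (Algebra.adjoin ℝ {φ} : Subalgebra ℝ (Module.End ℝ V)) ≃ₐ[ℝ]
      (Algebra.adjoin ℝ {M₀} : Subalgebra ℝ (Matrix (Fin n) (Fin n) ℝ)) :=
    (A.subalgebraMap _).trans (Subalgebra.equivOfEq _ _ hmap)
  have hE1 : ∀ s : (Algebra.adjoin ℝ {φ} : Subalgebra ℝ (Module.End ℝ V)),
      ((E1 s : (Algebra.adjoin ℝ {M₀} : Subalgebra ℝ (Matrix (Fin n) (Fin n) ℝ))) :
        Matrix (Fin n) (Fin n) ℝ) = A (s : Module.End ℝ V) := fun s => rfl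
  have hkey : ∀ (s : (Algebra.adjoin ℝ {φ} : Subalgebra ℝ (Module.End ℝ V))) (x : V),
      b.equivFun ((s : Module.End ℝ V) x) =
        ((E1 s : (Algebra.adjoin ℝ {M₀} : Subalgebra ℝ (Matrix (Fin n) (Fin n) ℝ))) :
          Matrix (Fin n) (Fin n) ℝ).mulVec (b.equivFun x) := by
    intro s x
    rw [hE1]
    have hAs : A (s : Module.End ℝ V) = LinearMap.toMatrix b b (s : Module.End ℝ V) := rfl
    rw [hAs]
    ext i
    rw [Module.Basis.equivFun_apply, Module.Basis.equivFun_apply, LinearMap.toMatrix_mulVec_repr]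
  refine ⟨LinearEquiv.prodCongr E1.toLinearEquiv b.equivFun, ?_⟩
  intro u w
  have happ : ∀ p : (Algebra.adjoin ℝ {φ} : Subalgebra ℝ (Module.End ℝ V)) × V,
      (LinearEquiv.prodCongr E1.toLinearEquiv b.equivFun) p = (E1 p.1, b.equivFun p.2) :=
    fun p => rfl
  rw [happ, happ, happ]
  refine Prod.ext ?_ ?_
  · exact map_zero E1
  · simp only
    rw [map_sub, hkey, hkey]
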